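/- (Kaplansky parallelogram law in B(H).) Let H be a Hilbert space and let p, q be orthogonal projections on H. Then there exists a partial isometry v ∈ B(H) such that v*v = p − (p ∧ q) and v v* = (p ∨ q) − q, where p ∧ q is the projection onto range(p) ∩ range(q) and p ∨ q is the projection onto the closed span of range(p) ∪ range(q). -/

import Mathlib

open ContinuousLinearMap in
private lemma idem_fix {H : Type*} [NormedAddCommGroup H] [InnerProductSpace ℂ H] [CompleteSpace H]
    {g : H →L[ℂ] H} (hg : g * g = g) {y : H} (hy : y ∈ LinearMap.range (g : H →ₗ[ℂ] H)) : g y = y := by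
  obtain ⟨x, rfl⟩ := hy
  have := congrFun (congrArg (fun f : H →L[ℂ] H => (f : H → H)) hg) x
  simpa [ContinuousLinearMap.mul_apply] using this

private lemma proj_eq_of_ker {H : Type*} [NormedAddCommGroup H] [InnerProductSpace ℂ H] [CompleteSpace H]
    {g h : H →L[ℂ] H} (hg_sa : star g = g) (hg : g * g = g)
    (hh_sa : star h = h) (hh : h * h = h)
    (hk : ∀ x, g x = 0 ↔ h x = 0) : g = h := by
  have hgh : g * h = g := by
    ext x
    have h1 : h (x - h x) = 0 := by
      have := idem_fix hh (LinearMap.mem_range_self (h : H →ₗ[ℂ] H) x)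
      simp only [ContinuousLinearMap.coe_coe] at this
      simp [this]
    have h2 : g (x - h x) = 0 := (hk _).2 h1
    have : g x - g (h x) = 0 := by rw [← map_sub]; exact h2
    have := sub_eq_zero.mp this
    simp [ContinuousLinearMap.mul_apply, this]
  have : star (g * h) = star g := by rw [hgh]
  rw [star_mul, hg_sa, hh_sa] at this
  -- this : h * g = g
  have hhg : h * g = h := by
    ext x
    have h1 : g (x - g x) = 0 := by
      have := idem_fix hg (LinearMap.mem_range_self (g : H →ₗ[ℂ] H) x)
      simp only [ContinuousLinearMap.coe_coe] at this
      simp [this]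
    have h2 : h (x - g x) = 0 := (hk _).1 h1
    have : h x - h (g x) = 0 := by rw [← map_sub]; exact h2
    have := sub_eq_zero.mp this
    simp [ContinuousLinearMap.mul_apply, this]
  rw [hhg] at this
  exact this.symm

private lemma proj_eq_of_range {H : Type*} [NormedAddCommGroup H] [InnerProductSpace ℂ H] [CompleteSpace H]
    {g h : H →L[ℂ] H} (hg_sa : star g = g) (hg : g * g = g)
    (hh_sa : star h = h) (hh : h * h = h)
    (hr : LinearMap.range (g : H →ₗ[ℂ] H) = LinearMap.range (h : H →ₗ[ℂ] H)) : g = h := by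
  have hhg : h * g = g := by
    ext x
    have : g x ∈ LinearMap.range (h : H →ₗ[ℂ] H) := hr ▸ LinearMap.mem_range_self (g : H →ₗ[ℂ] H) x
    simpa [ContinuousLinearMap.mul_apply] using idem_fix hh this
  have hgh : g * h = h := by
    ext x
    have : h x ∈ LinearMap.range (g : H →ₗ[ℂ] H) := hr.symm ▸ LinearMap.mem_range_self (h : H →ₗ[ℂ] H) x
    simpa [ContinuousLinearMap.mul_apply] using idem_fix hg this
  have : star (h * g) = star g := by rw [hhg]
  rw [star_mul, hg_sa, hh_sa] at this
  rw [hgh] at this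
  exact this.symm

set_option synthInstance.maxHeartbeats 2000000
set_option maxHeartbeats 2000000
local notation "⟪" x ", " y "⟫" => @inner ℂ _ _ x y

open ContinuousLinearMap in
private lemma polar_exists {H : Type*} [NormedAddCommGroup H] [InnerProductSpace ℂ H]
    [CompleteSpace H] (a : H →L[ℂ] H) :
    ∃ v : H →L[ℂ] H, v * star v * v = v ∧ (∀ x, (star v * v) x = 0 ↔ a x = 0) ∧
      LinearMap.range ((v * star v : H →L[ℂ] H) : H →ₗ[ℂ] H) = (LinearMap.range (a : H →ₗ[ℂ] H)).topologicalClosure := by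
  have hpos : 0 ≤ star a * a := star_mul_self_nonneg a
  set m := CFC.sqrt (star a * a) with hm_def
  have hm_sa : IsSelfAdjoint m := (CFC.sqrt_nonneg _).isSelfAdjoint
  have hm_sq : m * m = star a * a := by
    have := CFC.sq_sqrt (star a * a) hpos
    rwa [sq] at this
  have hm_adj : ContinuousLinearMap.adjoint m = m := by
    rw [← ContinuousLinearMap.star_eq_adjoint]; exact hm_sa
  have hinner_m : ∀ x y : H, ⟪m x, y⟫ = ⟪x, m y⟫ := by
    intro x y
    conv_lhs => rw [← hm_adj]
    exact ContinuousLinearMap.adjoint_inner_left m y x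
  have hnorm : ∀ x, ‖m x‖ = ‖a x‖ := by
    intro x
    have h1 : ⟪m x, m x⟫ = ⟪a x, a x⟫ := by
      rw [hinner_m]
      have : m (m x) = (star a) (a x) := by
        have := congrFun (congrArg (fun f : H →L[ℂ] H => (f : H → H)) hm_sq) x
        simpa [ContinuousLinearMap.mul_apply] using this
      rw [this, ContinuousLinearMap.star_eq_adjoint, ContinuousLinearMap.adjoint_inner_right]
    have h2 : ‖m x‖ ^ 2 = ‖a x‖ ^ 2 := by
      rw [← @inner_self_eq_norm_sq ℂ, ← @inner_self_eq_norm_sq ℂ, h1]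
    nlinarith [norm_nonneg (m x), norm_nonneg (a x)]
  have hker : ∀ x, m x = 0 ↔ a x = 0 := by
    intro x
    rw [← norm_eq_zero (a := m x), ← norm_eq_zero (a := a x), hnorm]
  classical
  -- the closure of the range of m
  set R : Submodule ℂ H := LinearMap.range (m : H →ₗ[ℂ] H) with hR_def
  set K : Submodule ℂ H := R.topologicalClosure with hK_def
  have hRK : R ≤ K := R.le_topologicalClosure
  haveI : CompleteSpace K := Submodule.topologicalClosure.completeSpace R
  -- inclusion of R into K as an isometric CLM
  let eLI : R →ₗᵢ[ℂ] K := ⟨Submodule.inclusion hRK, fun x => rfl⟩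
  let e : R →L[ℂ] K := eLI.toContinuousLinearMap
  have h_e : IsUniformInducing e := eLI.isometry.isUniformInducing
  have hdense : DenseRange e := by
    intro y
    rw [closure_subtype]
    have himg : (Subtype.val '' Set.range e : Set H) = (R : Set H) := by
      ext z
      constructor
      · rintro ⟨w, ⟨u, rfl⟩, rfl⟩
        exact u.2
      · intro hz
        exact ⟨e ⟨z, hz⟩, ⟨⟨z, hz⟩, rfl⟩, rfl⟩
    rw [himg]
    have h2 : (y : H) ∈ (R.topologicalClosure : Set H) := y.2
    rwa [Submodule.topologicalClosure_coe] at h2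
  -- factor `a` through the range of `m`, isometrically
  have hker_le : LinearMap.ker (m : H →ₗ[ℂ] H) ≤ LinearMap.ker (a : H →ₗ[ℂ] H) := by
    intro x hx
    exact (hker x).1 hx
  set abar : (H ⧸ LinearMap.ker (m : H →ₗ[ℂ] H)) →ₗ[ℂ] H :=
    (LinearMap.ker (m : H →ₗ[ℂ] H)).liftQ (a : H →ₗ[ℂ] H) hker_le with habar
  set w : R →ₗ[ℂ] H :=
    abar.comp (m : H →ₗ[ℂ] H).quotKerEquivRange.symm.toLinearMap with hw_def
  have hw : ∀ (x : H) (h : m x ∈ R), w ⟨m x, h⟩ = a x := by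
    intro x h
    have h1 : (m : H →ₗ[ℂ] H).quotKerEquivRange.symm ⟨m x, h⟩
        = (LinearMap.ker (m : H →ₗ[ℂ] H)).mkQ x :=
      LinearMap.quotKerEquivRange_symm_apply_image (m : H →ₗ[ℂ] H) x h
    show abar ((m : H →ₗ[ℂ] H).quotKerEquivRange.symm ⟨m x, h⟩) = a x
    rw [h1]
    rfl
  have hwn : ∀ y : R, ‖w y‖ = ‖y‖ := by
    intro y
    obtain ⟨x, hx⟩ := y.2
    have hyx : y = ⟨m x, ⟨x, rfl⟩⟩ := Subtype.ext hx.symm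
    rw [hyx, hw x ⟨x, rfl⟩]
    show ‖a x‖ = ‖m x‖
    rw [hnorm]
  let W : R →ₗᵢ[ℂ] H := ⟨w, hwn⟩
  let f₀ : R →L[ℂ] H := W.toContinuousLinearMap
  let E : K →L[ℂ] H := ContinuousLinearMap.extend f₀ e
  have hE1 : ∀ z : R, E (e z) = f₀ z := fun z =>
    ContinuousLinearMap.extend_eq f₀ hdense h_e z
  have hEnorm : ∀ y : K, ‖E y‖ = ‖y‖ := by
    intro y
    refine hdense.induction_on y (isClosed_eq (continuous_norm.comp E.continuous)
      continuous_norm) ?_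
    intro z
    rw [hE1]
    exact W.norm_map z
  let EL : K →ₗᵢ[ℂ] H := ⟨E.toLinearMap, hEnorm⟩
  have hinner_E : ∀ y z : K, ⟪E y, E z⟫ = ⟪(y : H), (z : H)⟫ := by
    intro y z
    exact EL.inner_map_map y z
  let P : H →L[ℂ] K := K.orthogonalProjectionOnto
  let v : H →L[ℂ] H := E.comp P
  have hmemK : ∀ x : H, m x ∈ K := fun x => hRK ⟨x, rfl⟩
  have hPm : ∀ x : H, P (m x) = ⟨m x, hmemK x⟩ := fun x =>
    Submodule.orthogonalProjectionOnto_mem_subspace_eq_self (⟨m x, hmemK x⟩ : K)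
  have hvm : ∀ x, v (m x) = a x := by
    intro x
    show E (P (m x)) = a x
    rw [hPm]
    have he : e ⟨m x, ⟨x, rfl⟩⟩ = ⟨m x, hmemK x⟩ := rfl
    rw [← he, hE1]
    exact hw x ⟨x, rfl⟩
  have hv_inner : ∀ x y : H, ⟪v x, v y⟫ = ⟪((P x : K) : H), ((P y : K) : H)⟫ := fun x y =>
    hinner_E (P x) (P y)
  have hPP : ∀ x : H, P ((P x : K) : H) = P x := fun x =>
    Submodule.orthogonalProjectionOnto_mem_subspace_eq_self (P x)
  let Pr : H →L[ℂ] H := K.subtypeL.comp P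
  have hvv : star v * v = Pr := by
    refine ContinuousLinearMap.ext fun y => ?_
    refine ext_inner_left ℂ fun x => ?_
    calc ⟪x, (star v * v) y⟫ = ⟪x, ContinuousLinearMap.adjoint v (v y)⟫ := by
          rw [ContinuousLinearMap.mul_apply, ContinuousLinearMap.star_eq_adjoint]
      _ = ⟪v x, v y⟫ := ContinuousLinearMap.adjoint_inner_right v x (v y)
      _ = ⟪((P x : K) : H), ((P y : K) : H)⟫ := hv_inner x y
      _ = ⟪x, ((P ((P y : K) : H) : K) : H)⟫ :=
          Submodule.inner_starProjection_left_eq_right K x ((P y : K) : H)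
      _ = ⟪x, Pr y⟫ := by rw [hPP]; rfl
  have hvPr : v * Pr = v := by
    refine ContinuousLinearMap.ext fun x => ?_
    show E (P ((P x : K) : H)) = E (P x)
    rw [hPP]
  have hviso : v * star v * v = v := by
    rw [mul_assoc, hvv, hvPr]
  -- kernel identification
  have hKperp : ∀ x : H, x ∈ Kᗮ ↔ m x = 0 := by
    intro x
    constructor
    · intro hx
      refine ext_inner_left ℂ fun y => ?_
      have h0 : ⟪m y, x⟫ = 0 := (Submodule.mem_orthogonal K x).1 hx (m y) (hmemK y)
      rw [inner_zero_right, ← hinner_m]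
      exact h0
    · intro hmx
      have hsub : R ≤ LinearMap.ker ((innerSL ℂ x : H →L[ℂ] ℂ) : H →ₗ[ℂ] ℂ) := by
        rintro u ⟨z, rfl⟩
        have : ⟪x, m z⟫ = 0 := by rw [← hinner_m, hmx, inner_zero_left]
        simpa [LinearMap.mem_ker] using this
      have hclosed : IsClosed ((LinearMap.ker ((innerSL ℂ x : H →L[ℂ] ℂ) : H →ₗ[ℂ] ℂ) : Submodule ℂ H) : Set H) :=
        ContinuousLinearMap.isClosed_ker (innerSL ℂ x)
      have hle : R.topologicalClosure ≤ LinearMap.ker ((innerSL ℂ x : H →L[ℂ] ℂ) : H →ₗ[ℂ] ℂ) :=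
        R.topologicalClosure_minimal hsub hclosed
      rw [Submodule.mem_orthogonal']
      intro u hu
      have := hle hu
      simpa using this
  have hkerclaim : ∀ x, (star v * v) x = 0 ↔ a x = 0 := by
    intro x
    rw [hvv]
    have h1 : Pr x = 0 ↔ P x = 0 := by
      constructor
      · intro h
        exact Subtype.ext h
      · intro h
        show ((P x : K) : H) = 0
        rw [h]; rfl
    rw [h1, Submodule.orthogonalProjectionOnto_eq_zero_iff]
    rw [hKperp, hker]
  -- range identification
  have hva : ∀ x, (star v) (a x) = m x := by
    intro x
    refine ext_inner_left ℂ fun z => ?_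
    calc ⟪z, (star v) (a x)⟫ = ⟪z, ContinuousLinearMap.adjoint v (a x)⟫ := by
          rw [ContinuousLinearMap.star_eq_adjoint]
      _ = ⟪v z, a x⟫ := ContinuousLinearMap.adjoint_inner_right v z (a x)
      _ = ⟪v z, v (m x)⟫ := by rw [hvm]
      _ = ⟪((P z : K) : H), ((P (m x) : K) : H)⟫ := hv_inner z (m x)
      _ = ⟪((P z : K) : H), m x⟫ := by rw [hPm]
      _ = ⟪z, ((P (m x) : K) : H)⟫ :=
          Submodule.inner_starProjection_left_eq_right K z (m x)
      _ = ⟪z, m x⟫ := by rw [hPm]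
  have hfix : ∀ x, (v * star v) (a x) = a x := by
    intro x
    show v ((star v) (a x)) = a x
    rw [hva, hvm]
  have hrangeE : ∀ k : K, E k ∈ closure ((LinearMap.range (a : H →ₗ[ℂ] H) : Submodule ℂ H) : Set H) := by
    intro k
    refine hdense.induction_on k (IsClosed.preimage E.continuous isClosed_closure) ?_
    intro z
    obtain ⟨x, hx⟩ := z.2
    have hzx : z = ⟨m x, ⟨x, rfl⟩⟩ := Subtype.ext hx.symm
    rw [hE1, hzx]
    have : f₀ (⟨m x, ⟨x, rfl⟩⟩ : R) = a x := hw x ⟨x, rfl⟩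
    rw [this]
    exact subset_closure ⟨x, rfl⟩
  have hrangeclaim : LinearMap.range ((v * star v : H →L[ℂ] H) : H →ₗ[ℂ] H) = (LinearMap.range (a : H →ₗ[ℂ] H)).topologicalClosure := by
    apply le_antisymm
    · rintro y ⟨x, rfl⟩
      have : (v * star v) x = E (P ((star v) x)) := rfl
      rw [← SetLike.mem_coe, Submodule.topologicalClosure_coe]
      rw [ContinuousLinearMap.coe_coe, this]
      exact hrangeE _
    · intro y hy
      have hy' : y ∈ closure ((LinearMap.range (a : H →ₗ[ℂ] H) : Submodule ℂ H) : Set H) := by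
        rw [← Submodule.topologicalClosure_coe]
        exact hy
      have hfixy : (v * star v) y = y := by
        have hcl : IsClosed {z : H | (v * star v) z = z} :=
          isClosed_eq (v * star v).continuous continuous_id
        have hsub : ((LinearMap.range (a : H →ₗ[ℂ] H) : Submodule ℂ H) : Set H) ⊆
            {z : H | (v * star v) z = z} := by
          rintro z ⟨x, rfl⟩
          exact hfix x
        exact closure_minimal hsub hcl hy'
      exact ⟨y, hfixy⟩
  exact ⟨v, hviso, hkerclaim, hrangeclaim⟩

theorem stmt13 {H : Type*} [NormedAddCommGroup H] [InnerProductSpace ℂ H] [CompleteSpace H]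
    (p q : H →L[ℂ] H) (hp_sa : star p = p) (hp_idem : p * p = p)
    (hq_sa : star q = q) (hq_idem : q * q = q)
    (r : H →L[ℂ] H) (hr_sa : star r = r) (hr_idem : r * r = r)
    (hr_range : LinearMap.range (r : H →ₗ[ℂ] H) = LinearMap.range (p : H →ₗ[ℂ] H) ⊓ LinearMap.range (q : H →ₗ[ℂ] H))
    (s : H →L[ℂ] H) (hs_sa : star s = s) (hs_idem : s * s = s)
    (hs_range : LinearMap.range (s : H →ₗ[ℂ] H)
      = (LinearMap.range (p : H →ₗ[ℂ] H) ⊔ LinearMap.range (q : H →ₗ[ℂ] H)).topologicalClosure) :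
    ∃ v : H →L[ℂ] H, v * star v * v = v ∧ star v * v = p - r ∧ v * star v = s - q := by
  classical
  have app : ∀ {f g : H →L[ℂ] H}, f = g → ∀ x, f x = g x :=
    fun h x => DFunLike.ext_iff.mp h x
  have hmem_r : ∀ x, r x ∈ LinearMap.range (p : H →ₗ[ℂ] H) ∧ r x ∈ LinearMap.range (q : H →ₗ[ℂ] H) := by
    intro x
    have := LinearMap.mem_range_self (r : H →ₗ[ℂ] H) x
    rw [hr_range, Submodule.mem_inf] at this
    exact this
  have hpr : p * r = r := by
    ext x; simpa [ContinuousLinearMap.mul_apply] using idem_fix hp_idem (hmem_r x).1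
  have hqr : q * r = r := by
    ext x; simpa [ContinuousLinearMap.mul_apply] using idem_fix hq_idem (hmem_r x).2
  have hrp : r * p = r := by
    have := congrArg star hpr
    rwa [star_mul, hp_sa, hr_sa] at this
  have hps_le : LinearMap.range (p : H →ₗ[ℂ] H) ≤ LinearMap.range (s : H →ₗ[ℂ] H) := by
    rw [hs_range]
    exact le_trans le_sup_left (Submodule.le_topologicalClosure _)
  have hqs_le : LinearMap.range (q : H →ₗ[ℂ] H) ≤ LinearMap.range (s : H →ₗ[ℂ] H) := by
    rw [hs_range]
    exact le_trans le_sup_right (Submodule.le_topologicalClosure _)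
  have hsp : s * p = p := by
    ext x
    simpa [ContinuousLinearMap.mul_apply] using
      idem_fix hs_idem (hps_le (LinearMap.mem_range_self (p : H →ₗ[ℂ] H) x))
  have hsq : s * q = q := by
    ext x
    simpa [ContinuousLinearMap.mul_apply] using
      idem_fix hs_idem (hqs_le (LinearMap.mem_range_self (q : H →ₗ[ℂ] H) x))
  have hqs : q * s = q := by
    have := congrArg star hsq
    rwa [star_mul, hs_sa, hq_sa] at this
  have he_sa : star (p - r) = p - r := by rw [star_sub, hp_sa, hr_sa]
  have he_idem : (p - r) * (p - r) = p - r := by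
    rw [sub_mul, mul_sub, mul_sub, hp_idem, hpr, hrp, hr_idem]
    abel
  have hf_sa : star (s - q) = s - q := by rw [star_sub, hs_sa, hq_sa]
  have hf_idem : (s - q) * (s - q) = s - q := by
    rw [sub_mul, mul_sub, mul_sub, hs_idem, hsq, hqs, hq_idem]
    abel
  obtain ⟨v, hviso, hvker, hvrange⟩ := polar_exists (p - q * p)
  have hax : ∀ x, (p - q * p) x = p x - q (p x) := by
    intro x
    simp [ContinuousLinearMap.sub_apply, ContinuousLinearMap.mul_apply]
  -- source projection
  have hvv_sa : star (star v * v) = star v * v := by rw [star_mul, star_star]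
  have hvv_idem : (star v * v) * (star v * v) = star v * v := by
    rw [mul_assoc, ← mul_assoc v (star v) v, hviso]
  have h1 : star v * v = p - r := by
    refine proj_eq_of_ker hvv_sa hvv_idem he_sa he_idem ?_
    intro x
    rw [hvker x]
    constructor
    · intro h
      rw [hax] at h
      have hpq : p x = q (p x) := by
        have := sub_eq_zero.mp h
        exact this
      have hmem : p x ∈ LinearMap.range (r : H →ₗ[ℂ] H) := by
        rw [hr_range, Submodule.mem_inf]
        exact ⟨LinearMap.mem_range_self (p : H →ₗ[ℂ] H) x, ⟨p x, hpq.symm⟩⟩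
      have hfix : r (p x) = p x := idem_fix hr_idem hmem
      have hrx : r x = p x := by
        have := app hrp x
        simp only [ContinuousLinearMap.mul_apply] at this
        rw [← this, hfix]
      show p x - r x = 0
      rw [hrx, sub_self]
    · intro h
      have hpx : p x = r x := sub_eq_zero.mp h
      rw [hax, hpx]
      have : q (r x) = r x := by
        have := app hqr x
        simpa [ContinuousLinearMap.mul_apply] using this
      rw [this, sub_self]
  -- target projection
  have hvvs_sa : star (v * star v) = v * star v := by rw [star_mul, star_star]
  have hvvs_idem : (v * star v) * (v * star v) = v * star v := by
    rw [← mul_assoc, hviso]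
  have hfa : ∀ x, (s - q) ((p - q * p) x) = (p - q * p) x := by
    intro x
    rw [hax]
    have hsp' : s (p x) = p x := by
      have := app hsp x; simpa [ContinuousLinearMap.mul_apply] using this
    have hsq' : s (q (p x)) = q (p x) := by
      have := app hsq (p x); simpa [ContinuousLinearMap.mul_apply] using this
    have hqq' : q (q (p x)) = q (p x) := by
      have := app hq_idem (p x); simpa [ContinuousLinearMap.mul_apply] using this
    simp only [ContinuousLinearMap.sub_apply, map_sub]
    rw [hsp', hsq', hqq']
    abel
  have hderive : ∀ z, (s - q) z = z → q z = 0 ∧ s z = z := by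
    intro z hz
    have h1 : s z - q z = z := by simpa [ContinuousLinearMap.sub_apply] using hz
    have hqsz : q (s z) = q z := by
      have := app hqs z; simpa [ContinuousLinearMap.mul_apply] using this
    have hqqz : q (q z) = q z := by
      have := app hq_idem z; simpa [ContinuousLinearMap.mul_apply] using this
    have h2 : q (s z) - q (q z) = q z := by rw [← map_sub, h1]
    rw [hqsz, hqqz, sub_self] at h2
    have hqz : q z = 0 := h2.symm
    refine ⟨hqz, ?_⟩
    have := h1
    rw [hqz, sub_zero] at this
    exact this
  set L : Submodule ℂ H := (LinearMap.range ((p - q * p : H →L[ℂ] H) : H →ₗ[ℂ] H)).topologicalClosure with hL_def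
  haveI : CompleteSpace L := Submodule.topologicalClosure.completeSpace _
  have hfixL : ∀ z ∈ L, (s - q) z = z := by
    intro z hz
    have hz' : z ∈ closure ((LinearMap.range ((p - q * p : H →L[ℂ] H) : H →ₗ[ℂ] H) : Submodule ℂ H) : Set H) := by
      rw [← Submodule.topologicalClosure_coe]
      exact hz
    have hcl : IsClosed {u : H | (s - q) u = u} :=
      isClosed_eq (s - q).continuous continuous_id
    have hsub : ((LinearMap.range ((p - q * p : H →L[ℂ] H) : H →ₗ[ℂ] H) : Submodule ℂ H) : Set H) ⊆
        {u : H | (s - q) u = u} := by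
      rintro u ⟨x, rfl⟩
      exact hfa x
    exact closure_minimal hsub hcl hz'
  have hLrange : L = LinearMap.range ((s - q : H →L[ℂ] H) : H →ₗ[ℂ] H) := by
    apply le_antisymm
    · intro y hy
      exact ⟨y, hfixL y hy⟩
    · intro y hy
      have hfixy : (s - q) y = y := idem_fix hf_idem hy
      obtain ⟨hqy, hsy⟩ := hderive y hfixy
      set y₁ : H := ((L.orthogonalProjectionOnto y : L) : H) with hy₁_def
      have hy₁L : y₁ ∈ L := (L.orthogonalProjectionOnto y).2
      have hy₂perp : y - y₁ ∈ Lᗮ := L.sub_starProjection_mem_orthogonal y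
      obtain ⟨hqy₁, hsy₁⟩ := hderive y₁ (hfixL y₁ hy₁L)
      have hqy₂ : q (y - y₁) = 0 := by rw [map_sub, hqy, hqy₁, sub_zero]
      have hsy₂ : s (y - y₁) = y - y₁ := by rw [map_sub, hsy, hsy₁]
      have hperp_a : y - y₁ ∈ (LinearMap.range ((p - q * p : H →L[ℂ] H) : H →ₗ[ℂ] H))ᗮ :=
        Submodule.orthogonal_le (Submodule.le_topologicalClosure _) hy₂perp
      have hstar_a : (star (p - q * p)) (y - y₁) = 0 := by
        refine ext_inner_left ℂ fun z => ?_
        rw [ContinuousLinearMap.star_eq_adjoint, ContinuousLinearMap.adjoint_inner_right,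
          inner_zero_right]
        exact (Submodule.mem_orthogonal _ _).1 hperp_a _ (LinearMap.mem_range_self _ z)
      have hsa_eq : star (p - q * p) = p - p * q := by
        rw [star_sub, star_mul, hp_sa, hq_sa]
      rw [hsa_eq] at hstar_a
      have hpy₂ : p (y - y₁) = 0 := by
        have : p (y - y₁) - p (q (y - y₁)) = 0 := by
          simpa [ContinuousLinearMap.sub_apply, ContinuousLinearMap.mul_apply] using hstar_a
        rwa [hqy₂, map_zero, sub_zero] at this
      -- y - y₁ is orthogonal to range p ⊔ range q
      have hperp_sup : y - y₁ ∈ (LinearMap.range (p : H →ₗ[ℂ] H) ⊔ LinearMap.range (q : H →ₗ[ℂ] H))ᗮ := by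
        rw [Submodule.mem_orthogonal]
        intro u hu
        rw [Submodule.mem_sup] at hu
        obtain ⟨u₁, hu₁, u₂, hu₂, rfl⟩ := hu
        obtain ⟨z₁, rfl⟩ := hu₁
        obtain ⟨z₂, rfl⟩ := hu₂
        rw [inner_add_left]
        have e₁ : ⟪p z₁, y - y₁⟫ = 0 := by
          conv_lhs => rw [← hp_sa]
          rw [ContinuousLinearMap.star_eq_adjoint, ContinuousLinearMap.adjoint_inner_left,
            hpy₂, inner_zero_right]
        have e₂ : ⟪q z₂, y - y₁⟫ = 0 := by
          conv_lhs => rw [← hq_sa]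
          rw [ContinuousLinearMap.star_eq_adjoint, ContinuousLinearMap.adjoint_inner_left,
            hqy₂, inner_zero_right]
        rw [ContinuousLinearMap.coe_coe, ContinuousLinearMap.coe_coe, e₁, e₂, add_zero]
      have hmem_cl : y - y₁ ∈ (LinearMap.range (p : H →ₗ[ℂ] H) ⊔ LinearMap.range (q : H →ₗ[ℂ] H)).topologicalClosure := by
        rw [← hs_range]
        exact ⟨y - y₁, hsy₂⟩
      have hmem_oo : y - y₁ ∈ (LinearMap.range (p : H →ₗ[ℂ] H) ⊔ LinearMap.range (q : H →ₗ[ℂ] H))ᗮᗮ := by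
        have hle : (LinearMap.range (p : H →ₗ[ℂ] H) ⊔ LinearMap.range (q : H →ₗ[ℂ] H)).topologicalClosure ≤
            (LinearMap.range (p : H →ₗ[ℂ] H) ⊔ LinearMap.range (q : H →ₗ[ℂ] H))ᗮᗮ :=
          Submodule.topologicalClosure_minimal _
            (Submodule.le_orthogonal_orthogonal _) (Submodule.isClosed_orthogonal _)
        exact hle hmem_cl
      have hy₂0 : y - y₁ = 0 := by
        have := (Submodule.mem_orthogonal _ _).1 hmem_oo _ hperp_sup
        exact inner_self_eq_zero.mp this
      have : y = y₁ := by
        have := sub_eq_zero.mp hy₂0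
        exact this
      rw [this]
      exact hy₁L
  have h2 : v * star v = s - q := by
    refine proj_eq_of_range hvvs_sa hvvs_idem hf_sa hf_idem ?_
    rw [hvrange, hLrange]
  exact ⟨v, hviso, h1, h2⟩
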